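/- arXiv:2108.06391 — 3 statements merged into one kernel-verified Lean document; each statement's English description precedes it below -/
import Mathlib

section
/- Let U have the Beta(2,2) distribution, i.e., density f(x) = 6x(1−x) on (0,1), and define Ψ(t) = E[(2U−1)·1{U ≥ t}], z(t) = Ψ(t) − t(1−t), and K_W(s,t) = E[(2U−1)²·1{U ≥ max(s,t)}] − Ψ(s)·Ψ(t). Then σ² = 4·∫₀¹∫₀¹ K_W(s,t)·z(s)·z(t) ds dt = 107297/94594500. -/
set_option maxHeartbeats 4000000
open MeasureTheory Set
open scoped NNReal ENNReal

private lemma ipoly (a b : ℝ) (c0 c1 c2 c3 c4 c5 c6 c7 c8 c9 c10 c11 c12 c13 c14 : ℝ) :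
    ∫ x in a..b, (c0*x^0 + c1*x^1 + c2*x^2 + c3*x^3 + c4*x^4 + c5*x^5 + c6*x^6 + c7*x^7 + c8*x^8 + c9*x^9 + c10*x^10 + c11*x^11 + c12*x^12 + c13*x^13 + c14*x^14) =
      (c0/1*b^1 + c1/2*b^2 + c2/3*b^3 + c3/4*b^4 + c4/5*b^5 + c5/6*b^6 + c6/7*b^7 + c7/8*b^8 + c8/9*b^9 + c9/10*b^10 + c10/11*b^11 + c11/12*b^12 + c12/13*b^13 + c13/14*b^14 + c14/15*b^15) - (c0/1*a^1 + c1/2*a^2 + c2/3*a^3 + c3/4*a^4 + c4/5*a^5 + c5/6*a^6 + c6/7*a^7 + c7/8*a^8 + c8/9*a^9 + c9/10*a^10 + c10/11*a^11 + c11/12*a^12 + c12/13*a^13 + c13/14*a^14 + c14/15*a^15) := by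
  have key : ∀ x : ℝ, HasDerivAt (fun y : ℝ => c0/1*y^1 + c1/2*y^2 + c2/3*y^3 + c3/4*y^4 + c4/5*y^5 + c5/6*y^6 + c6/7*y^7 + c7/8*y^8 + c8/9*y^9 + c9/10*y^10 + c10/11*y^11 + c11/12*y^12 + c12/13*y^13 + c13/14*y^14 + c14/15*y^15)
      (c0*x^0 + c1*x^1 + c2*x^2 + c3*x^3 + c4*x^4 + c5*x^5 + c6*x^6 + c7*x^7 + c8*x^8 + c9*x^9 + c10*x^10 + c11*x^11 + c12*x^12 + c13*x^13 + c14*x^14) x := by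
    intro x
    have H := (((((((((((((((HasDerivAt.const_mul (c0/1) (hasDerivAt_pow 1 x)).add (HasDerivAt.const_mul (c1/2) (hasDerivAt_pow 2 x))).add (HasDerivAt.const_mul (c2/3) (hasDerivAt_pow 3 x))).add (HasDerivAt.const_mul (c3/4) (hasDerivAt_pow 4 x))).add (HasDerivAt.const_mul (c4/5) (hasDerivAt_pow 5 x))).add (HasDerivAt.const_mul (c5/6) (hasDerivAt_pow 6 x))).add (HasDerivAt.const_mul (c6/7) (hasDerivAt_pow 7 x))).add (HasDerivAt.const_mul (c7/8) (hasDerivAt_pow 8 x))).add (HasDerivAt.const_mul (c8/9) (hasDerivAt_pow 9 x))).add (HasDerivAt.const_mul (c9/10) (hasDerivAt_pow 10 x))).add (HasDerivAt.const_mul (c10/11) (hasDerivAt_pow 11 x))).add (HasDerivAt.const_mul (c11/12) (hasDerivAt_pow 12 x))).add (HasDerivAt.const_mul (c12/13) (hasDerivAt_pow 13 x))).add (HasDerivAt.const_mul (c13/14) (hasDerivAt_pow 14 x))).add (HasDerivAt.const_mul (c14/15) (hasDerivAt_pow 15 x)))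
    refine H.congr_deriv ?_
    norm_num
    ring
  exact intervalIntegral.integral_eq_sub_of_hasDerivAt (fun x _ => key x)
    ((Continuous.intervalIntegrable (by fun_prop) a b))

/-- **Example (a), Beta(2,2), limiting variance**: if `U` has density `6x(1−x)` on
`(0,1)`, `Ψ(t) = E[(2U−1)·1{U ≥ t}]`, `z(t) = Ψ(t) − t(1−t)` and
`K_W(s,t) = E[(2U−1)²·1{U ≥ max(s,t)}] − Ψ(s)Ψ(t)`, then
`σ² = 4·∫₀¹∫₀¹ K_W(s,t)·z(s)·z(t) ds dt = 107297/94594500`. -/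
theorem beta_2_2_sigma_sq
    {Ω : Type*} [MeasurableSpace Ω] (P : Measure Ω) [IsProbabilityMeasure P]
    (U : Ω → ℝ) (hU : Measurable U)
    (hlaw : P.map U = (volume.restrict (Set.Ioo (0 : ℝ) 1)).withDensity
      (fun x => ENNReal.ofReal (6 * x * (1 - x))))
    (Ψ z : ℝ → ℝ) (KW : ℝ → ℝ → ℝ)
    (hΨ : ∀ t, Ψ t = ∫ ω in {ω | t ≤ U ω}, (2 * U ω - 1) ∂P)
    (hz : ∀ t, z t = Ψ t - t * (1 - t))
    (hKW : ∀ s t, KW s t =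
      (∫ ω in {ω | max s t ≤ U ω}, (2 * U ω - 1) ^ 2 ∂P) - Ψ s * Ψ t) :
    4 * ∫ s in Set.Ioo (0 : ℝ) 1, ∫ t in Set.Ioo (0 : ℝ) 1, KW s t * z s * z t
      = 107297 / 94594500 := by
  have transfer : ∀ g : ℝ → ℝ, Measurable g → ∀ t : ℝ,
      (∫ ω in {ω | t ≤ U ω}, g (U ω) ∂P)
        = ∫ x in Ioo (0:ℝ) 1 ∩ Ici t, g x * (6 * x * (1 - x)) := by
    intro g hg t
    have h1 : {ω | t ≤ U ω} = U ⁻¹' (Ici t) := rfl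
    rw [h1, ← setIntegral_map measurableSet_Ici hg.aestronglyMeasurable hU.aemeasurable, hlaw]
    rw [show (fun x : ℝ => ENNReal.ofReal (6 * x * (1 - x)))
        = fun x : ℝ => ((Real.toNNReal (6 * x * (1 - x)) : ℝ≥0) : ℝ≥0∞) from rfl]
    rw [setIntegral_withDensity_eq_setIntegral_smul
        (f := fun x : ℝ => Real.toNNReal (6 * x * (1 - x))) (by fun_prop) g measurableSet_Ici]
    rw [Measure.restrict_restrict measurableSet_Ici, inter_comm]
    refine setIntegral_congr_fun (measurableSet_Ioo.inter measurableSet_Ici) (fun x hx => ?_)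
    have h0 : (0:ℝ) ≤ 6 * x * (1 - x) := by nlinarith [hx.1.1, hx.1.2]
    rw [NNReal.smul_def, smul_eq_mul, Real.coe_toNNReal _ h0]
    ring
  have t1 : ∀ u : ℝ, (∫ ω in {ω | u ≤ U ω}, (2 * U ω - 1) ∂P)
      = ∫ x in Ioo (0:ℝ) 1 ∩ Ici u, (2 * x - 1) * (6 * x * (1 - x)) :=
    fun u => transfer (fun x => 2 * x - 1) (by fun_prop) u
  have t2 : ∀ u : ℝ, (∫ ω in {ω | u ≤ U ω}, (2 * U ω - 1) ^ 2 ∂P)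
      = ∫ x in Ioo (0:ℝ) 1 ∩ Ici u, (2 * x - 1) ^ 2 * (6 * x * (1 - x)) :=
    fun u => transfer (fun x => (2 * x - 1) ^ 2) (by fun_prop) u
  have seteq : ∀ u : ℝ, u ∈ Ioo (0:ℝ) 1 → Ioo (0:ℝ) 1 ∩ Ici u = Ico u 1 := by
    intro u hu
    ext y
    simp only [mem_inter_iff, mem_Ioo, mem_Ici, mem_Ico]
    constructor
    · rintro ⟨⟨_, h2⟩, h3⟩; exact ⟨h3, h2⟩
    · rintro ⟨h1, h2⟩; exact ⟨⟨lt_of_lt_of_le hu.1 h1, h2⟩, h1⟩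
  have hPval : ∀ u : ℝ, u ∈ Ioo (0:ℝ) 1 → Ψ u = ((3 : ℝ)*u^2 + (-6 : ℝ)*u^3 + (3 : ℝ)*u^4) := by
    intro u hu
    rw [hΨ u, t1 u, seteq u hu, integral_Ico_eq_integral_Ioo, ← integral_Ioc_eq_integral_Ioo,
      ← intervalIntegral.integral_of_le hu.2.le,
      intervalIntegral.integral_congr
        (g := fun x : ℝ => (0 : ℝ)*x^0 + (-6 : ℝ)*x^1 + (18 : ℝ)*x^2 + (-12 : ℝ)*x^3 + (0 : ℝ)*x^4 + (0 : ℝ)*x^5 + (0 : ℝ)*x^6 + (0 : ℝ)*x^7 + (0 : ℝ)*x^8 + (0 : ℝ)*x^9 + (0 : ℝ)*x^10 + (0 : ℝ)*x^11 + (0 : ℝ)*x^12 + (0 : ℝ)*x^13 + (0 : ℝ)*x^14) (fun x _ => by ring),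
      ipoly]
    ring
  have hMval : ∀ u : ℝ, u ∈ Ioo (0:ℝ) 1 →
      (∫ ω in {ω | u ≤ U ω}, (2 * U ω - 1) ^ 2 ∂P) = (((1 : ℝ)/5) + (-3 : ℝ)*u^2 + (10 : ℝ)*u^3 + (-12 : ℝ)*u^4 + ((24 : ℝ)/5)*u^5) := by
    intro u hu
    rw [t2 u, seteq u hu, integral_Ico_eq_integral_Ioo, ← integral_Ioc_eq_integral_Ioo,
      ← intervalIntegral.integral_of_le hu.2.le,
      intervalIntegral.integral_congr
        (g := fun x : ℝ => (0 : ℝ)*x^0 + (6 : ℝ)*x^1 + (-30 : ℝ)*x^2 + (48 : ℝ)*x^3 + (-24 : ℝ)*x^4 + (0 : ℝ)*x^5 + (0 : ℝ)*x^6 + (0 : ℝ)*x^7 + (0 : ℝ)*x^8 + (0 : ℝ)*x^9 + (0 : ℝ)*x^10 + (0 : ℝ)*x^11 + (0 : ℝ)*x^12 + (0 : ℝ)*x^13 + (0 : ℝ)*x^14) (fun x _ => by ring),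
      ipoly]
    ring
  have inner_eq : ∀ s : ℝ, s ∈ Ioo (0:ℝ) 1 →
      (∫ t in Ioo (0:ℝ) 1, KW s t * z s * z t) = (0 : ℝ)*s^0 + ((1 : ℝ)/150)*s^1 + ((-2 : ℝ)/75)*s^2 + ((13 : ℝ)/700)*s^3 + ((19 : ℝ)/175)*s^4 + ((-15 : ℝ)/14)*s^5 + ((1121 : ℝ)/140)*s^6 + ((-3709 : ℝ)/105)*s^7 + ((2024 : ℝ)/21)*s^8 + ((-693 : ℝ)/4)*s^9 + ((423 : ℝ)/2)*s^10 + ((-8757 : ℝ)/50)*s^11 + ((9471 : ℝ)/100)*s^12 + ((-756 : ℝ)/25)*s^13 + ((108 : ℝ)/25)*s^14 := by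
    intro s hs
    have step1 : (∫ t in Ioo (0:ℝ) 1, KW s t * z s * z t)
        = ∫ t in Ioo (0:ℝ) 1, ((((1 : ℝ)/5) + (-3 : ℝ)*(max s t)^2 + (10 : ℝ)*(max s t)^3 + (-12 : ℝ)*(max s t)^4 + ((24 : ℝ)/5)*(max s t)^5) - ((3 : ℝ)*s^2 + (-6 : ℝ)*s^3 + (3 : ℝ)*s^4) * ((3 : ℝ)*t^2 + (-6 : ℝ)*t^3 + (3 : ℝ)*t^4)) * ((-1 : ℝ)*s^1 + (4 : ℝ)*s^2 + (-6 : ℝ)*s^3 + (3 : ℝ)*s^4) * ((-1 : ℝ)*t^1 + (4 : ℝ)*t^2 + (-6 : ℝ)*t^3 + (3 : ℝ)*t^4) := by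
      refine setIntegral_congr_fun measurableSet_Ioo (fun t ht => ?_)
      have hmax : max s t ∈ Ioo (0:ℝ) 1 := ⟨lt_max_iff.mpr (Or.inl hs.1), max_lt hs.2 ht.2⟩
      rw [hKW s t, hz s, hz t, hMval (max s t) hmax, hPval s hs, hPval t ht]
      ring
    have e1 : (∫ t in (0:ℝ)..s, ((((1 : ℝ)/5) + (-3 : ℝ)*(max s t)^2 + (10 : ℝ)*(max s t)^3 + (-12 : ℝ)*(max s t)^4 + ((24 : ℝ)/5)*(max s t)^5) - ((3 : ℝ)*s^2 + (-6 : ℝ)*s^3 + (3 : ℝ)*s^4) * ((3 : ℝ)*t^2 + (-6 : ℝ)*t^3 + (3 : ℝ)*t^4)) * ((-1 : ℝ)*s^1 + (4 : ℝ)*s^2 + (-6 : ℝ)*s^3 + (3 : ℝ)*s^4) * ((-1 : ℝ)*t^1 + (4 : ℝ)*t^2 + (-6 : ℝ)*t^3 + (3 : ℝ)*t^4))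
        = ∫ t in (0:ℝ)..s, (0 : ℝ)*t^0 + (((1 : ℝ)/5)*s^1 + ((-4 : ℝ)/5)*s^2 + ((-9 : ℝ)/5)*s^3 + ((107 : ℝ)/5)*s^4 + (-70 : ℝ)*s^5 + ((609 : ℝ)/5)*s^6 + ((-606 : ℝ)/5)*s^7 + ((324 : ℝ)/5)*s^8 + ((-72 : ℝ)/5)*s^9)*t^1 + (((-4 : ℝ)/5)*s^1 + ((16 : ℝ)/5)*s^2 + ((36 : ℝ)/5)*s^3 + ((-428 : ℝ)/5)*s^4 + (280 : ℝ)*s^5 + ((-2436 : ℝ)/5)*s^6 + ((2424 : ℝ)/5)*s^7 + ((-1296 : ℝ)/5)*s^8 + ((288 : ℝ)/5)*s^9)*t^2 + (((6 : ℝ)/5)*s^1 + ((-24 : ℝ)/5)*s^2 + ((-99 : ℝ)/5)*s^3 + ((912 : ℝ)/5)*s^4 + (-555 : ℝ)*s^5 + ((4509 : ℝ)/5)*s^6 + ((-4176 : ℝ)/5)*s^7 + ((2079 : ℝ)/5)*s^8 + ((-432 : ℝ)/5)*s^9)*t^3 + (((-3 : ℝ)/5)*s^1 + ((12 : ℝ)/5)*s^2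 + ((297 : ℝ)/5)*s^3 + ((-1941 : ℝ)/5)*s^4 + (1020 : ℝ)*s^5 + ((-6957 : ℝ)/5)*s^6 + ((5058 : ℝ)/5)*s^7 + ((-1782 : ℝ)/5)*s^8 + ((216 : ℝ)/5)*s^9)*t^4 + ((-135 : ℝ)*s^3 + (810 : ℝ)*s^4 + (-2025 : ℝ)*s^5 + (2565 : ℝ)*s^6 + (-1620 : ℝ)*s^7 + (405 : ℝ)*s^8)*t^5 + ((171 : ℝ)*s^3 + (-1026 : ℝ)*s^4 + (2565 : ℝ)*s^5 + (-3249 : ℝ)*s^6 + (2052 : ℝ)*s^7 + (-513 : ℝ)*s^8)*t^6 + ((-108 : ℝ)*s^3 + (648 : ℝ)*s^4 + (-1620 : ℝ)*s^5 + (2052 : ℝ)*s^6 + (-1296 : ℝ)*s^7 + (324 : ℝ)*s^8)*t^7 + ((27 : ℝ)*s^3 + (-162 : ℝ)*s^4 + (405 : ℝ)*s^5 + (-513 : ℝ)*s^6 + (324 : ℝ)*s^7 + (-81 : ℝ)*s^8)*t^8 + (0 : ℝ)*t^9 + (0 : ℝ)*t^10 + (0 : ℝ)*t^11 + (0 : ℝ)*t^12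 + (0 : ℝ)*t^13 + (0 : ℝ)*t^14 := by
      refine intervalIntegral.integral_congr (fun t ht => ?_)
      rw [Set.uIcc_of_le hs.1.le] at ht
      rw [max_eq_left ht.2]
      ring
    have e2 : (∫ t in s..(1:ℝ), ((((1 : ℝ)/5) + (-3 : ℝ)*(max s t)^2 + (10 : ℝ)*(max s t)^3 + (-12 : ℝ)*(max s t)^4 + ((24 : ℝ)/5)*(max s t)^5) - ((3 : ℝ)*s^2 + (-6 : ℝ)*s^3 + (3 : ℝ)*s^4) * ((3 : ℝ)*t^2 + (-6 : ℝ)*t^3 + (3 : ℝ)*t^4)) * ((-1 : ℝ)*s^1 + (4 : ℝ)*s^2 + (-6 : ℝ)*s^3 + (3 : ℝ)*s^4) * ((-1 : ℝ)*t^1 + (4 : ℝ)*t^2 + (-6 : ℝ)*t^3 + (3 : ℝ)*t^4))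
        = ∫ t in s..(1:ℝ), (0 : ℝ)*t^0 + (((1 : ℝ)/5)*s^1 + ((-4 : ℝ)/5)*s^2 + ((6 : ℝ)/5)*s^3 + ((-3 : ℝ)/5)*s^4)*t^1 + (((-4 : ℝ)/5)*s^1 + ((16 : ℝ)/5)*s^2 + ((-24 : ℝ)/5)*s^3 + ((12 : ℝ)/5)*s^4)*t^2 + (((-9 : ℝ)/5)*s^1 + ((36 : ℝ)/5)*s^2 + ((-99 : ℝ)/5)*s^3 + ((297 : ℝ)/5)*s^4 + (-135 : ℝ)*s^5 + (171 : ℝ)*s^6 + (-108 : ℝ)*s^7 + (27 : ℝ)*s^8)*t^3 + (((107 : ℝ)/5)*s^1 + ((-428 : ℝ)/5)*s^2 + ((912 : ℝ)/5)*s^3 + ((-1941 : ℝ)/5)*s^4 + (810 : ℝ)*s^5 + (-1026 : ℝ)*s^6 + (648 : ℝ)*s^7 + (-162 : ℝ)*s^8)*t^4 + ((-70 : ℝ)*s^1 + (280 : ℝ)*s^2 + (-555 : ℝ)*s^3 + (1020 : ℝ)*s^4 + (-2025 : ℝ)*s^5 + (2565 : ℝ)*s^6 + (-1620 : ℝ)*s^7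 + (405 : ℝ)*s^8)*t^5 + (((609 : ℝ)/5)*s^1 + ((-2436 : ℝ)/5)*s^2 + ((4509 : ℝ)/5)*s^3 + ((-6957 : ℝ)/5)*s^4 + (2565 : ℝ)*s^5 + (-3249 : ℝ)*s^6 + (2052 : ℝ)*s^7 + (-513 : ℝ)*s^8)*t^6 + (((-606 : ℝ)/5)*s^1 + ((2424 : ℝ)/5)*s^2 + ((-4176 : ℝ)/5)*s^3 + ((5058 : ℝ)/5)*s^4 + (-1620 : ℝ)*s^5 + (2052 : ℝ)*s^6 + (-1296 : ℝ)*s^7 + (324 : ℝ)*s^8)*t^7 + (((324 : ℝ)/5)*s^1 + ((-1296 : ℝ)/5)*s^2 + ((2079 : ℝ)/5)*s^3 + ((-1782 : ℝ)/5)*s^4 + (405 : ℝ)*s^5 + (-513 : ℝ)*s^6 + (324 : ℝ)*s^7 + (-81 : ℝ)*s^8)*t^8 + (((-72 : ℝ)/5)*s^1 + ((288 : ℝ)/5)*s^2 + ((-432 : ℝ)/5)*s^3 + ((216 : ℝ)/5)*s^4)*t^9 + (0 : ℝ)*t^10 + (0 : ℝ)*t^11 + (0 : ℝ)*t^12 +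 (0 : ℝ)*t^13 + (0 : ℝ)*t^14 := by
      refine intervalIntegral.integral_congr (fun t ht => ?_)
      rw [Set.uIcc_of_le hs.2.le] at ht
      rw [max_eq_right ht.1]
      ring
    rw [step1, ← integral_Ioc_eq_integral_Ioo, ← intervalIntegral.integral_of_le zero_le_one,
      ← intervalIntegral.integral_add_adjacent_intervals
        (Continuous.intervalIntegrable (by fun_prop) 0 s)
        (Continuous.intervalIntegrable (by fun_prop) s 1),
      e1, e2, ipoly, ipoly]
    ring
  have outer : (∫ s in Ioo (0:ℝ) 1, ∫ t in Ioo (0:ℝ) 1, KW s t * z s * z t)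
      = ∫ s in Ioo (0:ℝ) 1, ((0 : ℝ)*s^0 + ((1 : ℝ)/150)*s^1 + ((-2 : ℝ)/75)*s^2 + ((13 : ℝ)/700)*s^3 + ((19 : ℝ)/175)*s^4 + ((-15 : ℝ)/14)*s^5 + ((1121 : ℝ)/140)*s^6 + ((-3709 : ℝ)/105)*s^7 + ((2024 : ℝ)/21)*s^8 + ((-693 : ℝ)/4)*s^9 + ((423 : ℝ)/2)*s^10 + ((-8757 : ℝ)/50)*s^11 + ((9471 : ℝ)/100)*s^12 + ((-756 : ℝ)/25)*s^13 + ((108 : ℝ)/25)*s^14) :=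
    setIntegral_congr_fun measurableSet_Ioo (fun s hs => inner_eq s hs)
  rw [outer, ← integral_Ioc_eq_integral_Ioo, ← intervalIntegral.integral_of_le zero_le_one, ipoly]
  norm_num
end

section
/- Let U have the Beta(2,3) distribution, i.e., density f(x) = 12x(1−x)² on (0,1), and define Ψ(t) = E[(2U−1)·1{U ≥ t}], z(t) = Ψ(t) − t(1−t), and K_W(s,t) = E[(2U−1)²·1{U ≥ max(s,t)}] − Ψ(s)·Ψ(t). Then σ² = 4·∫₀¹∫₀¹ K_W(s,t)·z(s)·z(t) ds dt = 13088573/2948195250. -/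
open MeasureTheory Set
open scoped NNReal ENNReal

noncomputable def psiP (t : ℝ) : ℝ := ((-1 : ℝ)/5) + (6 : ℝ) * t ^ 2 + (-16 : ℝ) * t ^ 3 + (15 : ℝ) * t ^ 4 + ((-24 : ℝ)/5) * t ^ 5
noncomputable def zP (t : ℝ) : ℝ := ((-1 : ℝ)/5) + (-1 : ℝ) * t + (7 : ℝ) * t ^ 2 + (-16 : ℝ) * t ^ 3 + (15 : ℝ) * t ^ 4 + ((-24 : ℝ)/5) * t ^ 5
noncomputable def e2P (t : ℝ) : ℝ := ((1 : ℝ)/5) + (-6 : ℝ) * t ^ 2 + (24 : ℝ) * t ^ 3 + (-39 : ℝ) * t ^ 4 + ((144 : ℝ)/5) * t ^ 5 + (-8 : ℝ) * t ^ 6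
noncomputable def innerP (s : ℝ) : ℝ := ((199 : ℝ)/86625) + ((199 : ℝ)/17325) * s + ((-1348 : ℝ)/17325) * s ^ 2 + ((47 : ℝ)/1575) * s ^ 3 + ((-3877 : ℝ)/5775) * s ^ 4 + ((91897 : ℝ)/9625) * s ^ 5 + ((-177677 : ℝ)/5775) * s ^ 6 + ((-42169 : ℝ)/1925) * s ^ 7 + ((876184 : ℝ)/1925) * s ^ 8 + ((-28929968 : ℝ)/17325) * s ^ 9 + ((310802407 : ℝ)/86625) * s ^ 10 + ((-2600452 : ℝ)/495) * s ^ 11 + ((13580708 : ℝ)/2475) * s ^ 12 + ((-3394588 : ℝ)/825) * s ^ 13 + ((1790144 : ℝ)/825) * s ^ 14 + ((-1050608 : ℝ)/1375) * s ^ 15 + ((44304 : ℝ)/275) * s ^ 16 + ((-384 : ℝ)/25) * s ^ 17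

lemma hasDerivAt_poly (c : ℕ → ℝ) (n : ℕ) (x : ℝ) :
    HasDerivAt (fun y => ∑ i ∈ Finset.range n, c i * y ^ (i+1) / (i+1))
      (∑ i ∈ Finset.range n, c i * x ^ i) x := by
  apply HasDerivAt.fun_sum
  intro i _
  have h := ((hasDerivAt_pow (i+1) x).const_mul (c i)).div_const ((i:ℝ)+1)
  convert h using 1
  · rfl
  have : ((i:ℝ)+1) ≠ 0 := by positivity
  push_cast
  field_simp

lemma integral_poly (c : ℕ → ℝ) (n : ℕ) (a b : ℝ) :
    ∫ x in a..b, ∑ i ∈ Finset.range n, c i * x ^ i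
      = ∑ i ∈ Finset.range n, c i * (b^(i+1) - a^(i+1))/(i+1) := by
  rw [intervalIntegral.integral_eq_sub_of_hasDerivAt
    (fun x _ => hasDerivAt_poly c n x)
    ((by fun_prop : Continuous fun x : ℝ => ∑ i ∈ Finset.range n, c i * x ^ i).intervalIntegrable a b)]
  rw [← Finset.sum_sub_distrib]
  exact Finset.sum_congr rfl (fun i _ => by ring)

lemma integral_poly' (f : ℝ → ℝ) (c : ℕ → ℝ) (n : ℕ) (a b : ℝ)
    (h : ∀ x, f x = ∑ i ∈ Finset.range n, c i * x ^ i) :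
    ∫ x in a..b, f x = ∑ i ∈ Finset.range n, c i * (b^(i+1) - a^(i+1))/(i+1) := by
  simp_rw [h]; exact integral_poly c n a b

lemma psi_int (t : ℝ) : ∫ x in t..(1:ℝ), (2*x-1) * (12*x*(1-x)^2) = psiP t := by
  rw [integral_poly' _ (fun i => [(0:ℝ), -12, 48, -60, 24].getD i 0) 5 t 1
    (by intro x; simp [Finset.sum_range_succ]; ring)]
  simp only [psiP, Finset.sum_range_succ, Finset.sum_range_zero, List.getD]
  norm_num
  ring

lemma e2_int (t : ℝ) : ∫ x in t..(1:ℝ), (2*x-1)^2 * (12*x*(1-x)^2) = e2P t := by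
  rw [integral_poly' _ (fun i => [(0:ℝ), 12, -72, 156, -144, 48].getD i 0) 6 t 1
    (by intro x; simp [Finset.sum_range_succ]; ring)]
  simp only [e2P, Finset.sum_range_succ, Finset.sum_range_zero, List.getD]
  norm_num
  ring

lemma key_reduce {Ω : Type*} [MeasurableSpace Ω] (P : Measure Ω) [IsProbabilityMeasure P]
    (U : Ω → ℝ) (hU : Measurable U)
    (hlaw : P.map U = (volume.restrict (Set.Ioo (0 : ℝ) 1)).withDensity
      (fun x => ENNReal.ofReal (12 * x * (1 - x) ^ 2)))
    (g : ℝ → ℝ) (hg : Continuous g) (c : ℝ) (hc : c ∈ Set.Ioo (0:ℝ) 1) :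
    ∫ ω in {ω | c ≤ U ω}, g (U ω) ∂P = ∫ x in c..1, g x * (12 * x * (1 - x) ^ 2) := by
  have h1 : {ω | c ≤ U ω} = U ⁻¹' (Ici c) := rfl
  rw [h1, ← setIntegral_map measurableSet_Ici
    (hg.aestronglyMeasurable) hU.aemeasurable, hlaw]
  have hd : (fun x : ℝ => ENNReal.ofReal (12 * x * (1 - x) ^ 2))
      = fun x : ℝ => ((Real.toNNReal (12 * x * (1 - x) ^ 2) : ℝ≥0) : ℝ≥0∞) := rfl
  rw [hd, setIntegral_withDensity_eq_setIntegral_smul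
    (by fun_prop : Measurable fun x : ℝ => Real.toNNReal (12 * x * (1 - x) ^ 2))
    g measurableSet_Ici]
  rw [Measure.restrict_restrict measurableSet_Ici]
  have h2 : Ici c ∩ Ioo (0:ℝ) 1 = Ico c 1 := by
    ext x
    simp only [mem_inter_iff, mem_Ici, mem_Ioo, mem_Ico]
    constructor
    · rintro ⟨h, _, h2⟩; exact ⟨h, h2⟩
    · rintro ⟨h, h2⟩; exact ⟨h, lt_of_lt_of_le hc.1 h, h2⟩
  rw [h2]
  rw [setIntegral_congr_fun measurableSet_Ico (g := fun x => g x * (12 * x * (1 - x) ^ 2))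
    (fun x hx => by
      have hx0 : (0:ℝ) ≤ 12 * x * (1 - x) ^ 2 := by
        have : 0 < x := lt_of_lt_of_le hc.1 hx.1
        positivity
      rw [NNReal.smul_def, Real.coe_toNNReal _ hx0, smul_eq_mul]; ring)]
  rw [MeasureTheory.integral_Ico_eq_integral_Ioo,
    ← MeasureTheory.integral_Ioc_eq_integral_Ioo,
    ← intervalIntegral.integral_of_le hc.2.le]

set_option maxHeartbeats 2000000 in
lemma inner_eval (s : ℝ) (hs : s ∈ Set.Ioo (0:ℝ) 1) :
    ∫ t in Set.Ioo (0:ℝ) 1, (e2P (max s t) - psiP s * psiP t) * zP s * zP t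
      = innerP s := by
  have hcont : Continuous (fun t => (e2P (max s t) - psiP s * psiP t) * zP s * zP t) := by
    simp only [e2P, psiP, zP]
    fun_prop
  have hint : ∀ a b : ℝ, IntervalIntegrable
      (fun t => (e2P (max s t) - psiP s * psiP t) * zP s * zP t) volume a b :=
    fun a b => hcont.intervalIntegrable a b
  rw [← MeasureTheory.integral_Ioc_eq_integral_Ioo,
    ← intervalIntegral.integral_of_le (zero_le_one),
    ← intervalIntegral.integral_add_adjacent_intervals (hint 0 s) (hint s 1)]
  have h1 : ∫ t in (0:ℝ)..s, (e2P (max s t) - psiP s * psiP t) * zP s * zP t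
      = ∫ t in (0:ℝ)..s, (e2P s - psiP s * psiP t) * zP s * zP t := by
    apply intervalIntegral.integral_congr
    intro t ht
    rw [uIcc_of_le hs.1.le] at ht
    simp only [max_eq_left ht.2]
  have h2 : ∫ t in s..(1:ℝ), (e2P (max s t) - psiP s * psiP t) * zP s * zP t
      = ∫ t in s..(1:ℝ), (e2P t - psiP s * psiP t) * zP s * zP t := by
    apply intervalIntegral.integral_congr
    intro t ht
    rw [uIcc_of_le hs.2.le] at ht
    simp only [max_eq_right ht.1]
  rw [h1, h2]
  rw [integral_poly' _ (fun i => [zP s * e2P s * ((-1 : ℝ)/5) - zP s * psiP s * ((1 : ℝ)/25), zP s * e2P s * (-1 : ℝ) - zP s * psiP s * ((1 : ℝ)/5), zP s * e2P s * (7 : ℝ) - zP s * psiP s * ((-13 : ℝ)/5), zP s * e2P s * (-16 : ℝ) - zP s * psiP s * ((2 : ℝ)/5), zP s * e2P s * (15 : ℝ) - zP s * psiP s * (52 : ℝ), zP s * e2P s * ((-24 : ℝ)/5) - zP s * psiP s * ((-5527 : ℝ)/25), zP s * e2P s * (0 : ℝ) - zP s * psiP s * ((2279 : ℝ)/5), zP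 s * e2P s * (0 : ℝ) - zP s * psiP s * ((-2712 : ℝ)/5), zP s * e2P s * (0 : ℝ) - zP s * psiP s * ((1893 : ℝ)/5), zP s * e2P s * (0 : ℝ) - zP s * psiP s * (-144 : ℝ), zP s * e2P s * (0 : ℝ) - zP s * psiP s * ((576 : ℝ)/25)].getD i 0) 11 0 s
    (by intro x; simp [Finset.sum_range_succ, psiP, zP, e2P]; ring)]
  rw [integral_poly' _ (fun i => [zP s * ((-1 : ℝ)/25) - zP s * psiP s * ((1 : ℝ)/25), zP s * ((-1 : ℝ)/5) - zP s * psiP s * ((1 : ℝ)/5), zP s * ((13 : ℝ)/5) - zP s * psiP s * ((-13 : ℝ)/5), zP s * (-2 : ℝ) - zP s * psiP s * ((2 : ℝ)/5), zP s * ((-276 : ℝ)/5) - zP s * psiP s * (52 : ℝ), zP s * ((7407 : ℝ)/25) - zP s * psiP s * ((-5527 : ℝ)/25), zP s * ((-3871 : ℝ)/5) - zP s * psiP s * ((2279 : ℝ)/5), zP s * ((6112 : ℝ)/5) - zP s * psiP s * ((-2712 : ℝ)/5), zP s * (-1217 : ℝ) - zP s * psiP s * ((1893 : ℝ)/5), zP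 s * ((3736 : ℝ)/5) - zP s * psiP s * (-144 : ℝ), zP s * ((-6456 : ℝ)/25) - zP s * psiP s * ((576 : ℝ)/25), zP s * ((192 : ℝ)/5) - zP s * psiP s * (0 : ℝ)].getD i 0) 12 s 1
    (by intro x; simp [Finset.sum_range_succ, psiP, zP, e2P]; ring)]
  simp only [Finset.sum_range_succ, Finset.sum_range_zero, List.getD, psiP, zP, e2P, innerP]
  norm_num
  ring

/-- **Example (b), Beta(2,3), limiting variance**: if `U` has density `12x(1−x)²` on
`(0,1)`, `Ψ(t) = E[(2U−1)·1{U ≥ t}]`, `z(t) = Ψ(t) − t(1−t)` and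
`K_W(s,t) = E[(2U−1)²·1{U ≥ max(s,t)}] − Ψ(s)Ψ(t)`, then
`σ² = 4·∫₀¹∫₀¹ K_W(s,t)·z(s)·z(t) ds dt = 13088573/2948195250`. -/
theorem beta_2_3_sigma_sq
    {Ω : Type*} [MeasurableSpace Ω] (P : Measure Ω) [IsProbabilityMeasure P]
    (U : Ω → ℝ) (hU : Measurable U)
    (hlaw : P.map U = (volume.restrict (Set.Ioo (0 : ℝ) 1)).withDensity
      (fun x => ENNReal.ofReal (12 * x * (1 - x) ^ 2)))
    (Ψ z : ℝ → ℝ) (KW : ℝ → ℝ → ℝ)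
    (hΨ : ∀ t, Ψ t = ∫ ω in {ω | t ≤ U ω}, (2 * U ω - 1) ∂P)
    (hz : ∀ t, z t = Ψ t - t * (1 - t))
    (hKW : ∀ s t, KW s t =
      (∫ ω in {ω | max s t ≤ U ω}, (2 * U ω - 1) ^ 2 ∂P) - Ψ s * Ψ t) :
    4 * ∫ s in Set.Ioo (0 : ℝ) 1, ∫ t in Set.Ioo (0 : ℝ) 1, KW s t * z s * z t
      = 13088573 / 2948195250 := by
  have hΨI : ∀ t ∈ Set.Ioo (0:ℝ) 1, Ψ t = psiP t := by
    intro t ht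
    rw [hΨ t]
    exact (key_reduce P U hU hlaw (fun x => 2*x-1) (by fun_prop) t ht).trans (psi_int t)
  have hzI : ∀ t ∈ Set.Ioo (0:ℝ) 1, z t = zP t := by
    intro t ht
    rw [hz t, hΨI t ht]
    simp only [psiP, zP]; ring
  have hKWI : ∀ s t, s ∈ Set.Ioo (0:ℝ) 1 → t ∈ Set.Ioo (0:ℝ) 1 →
      KW s t = e2P (max s t) - psiP s * psiP t := by
    intro s t hs ht
    have hm : max s t ∈ Set.Ioo (0:ℝ) 1 :=
      ⟨lt_of_lt_of_le hs.1 (le_max_left s t), max_lt hs.2 ht.2⟩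
    rw [hKW s t, hΨI s hs, hΨI t ht]
    congr 1
    exact (key_reduce P U hU hlaw (fun x => (2*x-1)^2) (by fun_prop) _ hm).trans (e2_int _)
  have houter : ∫ s in Set.Ioo (0:ℝ) 1, ∫ t in Set.Ioo (0:ℝ) 1, KW s t * z s * z t
      = ∫ s in Set.Ioo (0:ℝ) 1, innerP s := by
    apply setIntegral_congr_fun measurableSet_Ioo
    intro s hs
    rw [← inner_eval s hs]
    apply setIntegral_congr_fun measurableSet_Ioo
    intro t ht
    simp only [hKWI s t hs ht, hzI s hs, hzI t ht]
  rw [houter, ← MeasureTheory.integral_Ioc_eq_integral_Ioo,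
    ← intervalIntegral.integral_of_le (zero_le_one)]
  rw [integral_poly' _ (fun i => [((199 : ℝ)/86625), ((199 : ℝ)/17325), ((-1348 : ℝ)/17325), ((47 : ℝ)/1575), ((-3877 : ℝ)/5775), ((91897 : ℝ)/9625), ((-177677 : ℝ)/5775), ((-42169 : ℝ)/1925), ((876184 : ℝ)/1925), ((-28929968 : ℝ)/17325), ((310802407 : ℝ)/86625), ((-2600452 : ℝ)/495), ((13580708 : ℝ)/2475), ((-3394588 : ℝ)/825), ((1790144 : ℝ)/825), ((-1050608 : ℝ)/1375), ((44304 : ℝ)/275), ((-384 : ℝ)/25)].getD i 0) 18 0 1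
    (by intro x; simp [Finset.sum_range_succ, innerP]; try ring)]
  simp only [Finset.sum_range_succ, Finset.sum_range_zero, List.getD]
  norm_num
end

section
/- Let U have the Beta(1,1/2) distribution, i.e., density f(x) = (1/2)(1−x)^{−1/2} on (0,1), and define Ψ(t) = E[(2U−1)·1{U ≥ t}], z(t) = Ψ(t) − t(1−t), and K_W(s,t) = E[(2U−1)²·1{U ≥ max(s,t)}] − Ψ(s)·Ψ(t). Then σ² = 4·∫₀¹∫₀¹ K_W(s,t)·z(s)·z(t) ds dt = 426456598/10854718875. -/
open MeasureTheory Set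
open scoped NNReal ENNReal

noncomputable def sq1 (t : ℝ) : ℝ := Real.sqrt (1 - t)

@[fun_prop] lemma continuous_sq1 : Continuous sq1 := by unfold sq1; fun_prop

noncomputable def psiv (t : ℝ) : ℝ := sq1 t - 2/3 * sq1 t ^ 3
noncomputable def e2v (t : ℝ) : ℝ := sq1 t - 4/3 * sq1 t ^ 3 + 4/5 * sq1 t ^ 5
noncomputable def zetav (t : ℝ) : ℝ := sq1 t - sq1 t ^ 2 - 2/3 * sq1 t ^ 3 + sq1 t ^ 4

@[fun_prop] lemma continuous_psiv : Continuous psiv := by unfold psiv; fun_prop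
@[fun_prop] lemma continuous_e2v : Continuous e2v := by unfold e2v; fun_prop
@[fun_prop] lemma continuous_zetav : Continuous zetav := by unfold zetav; fun_prop

noncomputable def FA (t : ℝ) : ℝ := (-(2/3)) * sq1 t ^ 3 + (1/2) * sq1 t ^ 4 + (4/15) * sq1 t ^ 5 + (-(1/3)) * sq1 t ^ 6
noncomputable def Ge (t : ℝ) : ℝ := (-(1/2)) * sq1 t ^ 4 + (2/5) * sq1 t ^ 5 + (2/3) * sq1 t ^ 6 + (-(2/3)) * sq1 t ^ 7 + (-(19/45)) * sq1 t ^ 8 + (64/135) * sq1 t ^ 9 + (8/75) * sq1 t ^ 10 + (-(8/55)) * sq1 t ^ 11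
noncomputable def Gp (t : ℝ) : ℝ := (-(1/2)) * sq1 t ^ 4 + (2/5) * sq1 t ^ 5 + (4/9) * sq1 t ^ 6 + (-(10/21)) * sq1 t ^ 7 + (-(1/9)) * sq1 t ^ 8 + (4/27) * sq1 t ^ 9
noncomputable def HH (t : ℝ) : ℝ := (-(131/1890)) * sq1 t ^ 4 + (262/4725) * sq1 t ^ 5 + (193/1701) * sq1 t ^ 6 + (-(1247/19845)) * sq1 t ^ 7 + (-(6577/42525)) * sq1 t ^ 8 + (-(1853/127575)) * sq1 t ^ 9 + (59/250) * sq1 t ^ 10 + (233/7425) * sq1 t ^ 11 + (-(209/810)) * sq1 t ^ 12 + (386/8775) * sq1 t ^ 13 + (20971/155925) * sq1 t ^ 14 + (-(6244/111375)) * sq1 t ^ 15 + (-(58/2475)) * sq1 t ^ 16 + (8/561) * sq1 t ^ 17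

@[fun_prop] lemma continuous_FA : Continuous FA := by unfold FA; fun_prop
@[fun_prop] lemma continuous_Ge : Continuous Ge := by unfold Ge; fun_prop
@[fun_prop] lemma continuous_Gp : Continuous Gp := by unfold Gp; fun_prop
@[fun_prop] lemma continuous_HH : Continuous HH := by unfold HH; fun_prop

lemma hasDerivAt_sq1 {x : ℝ} (hx : x < 1) :
    HasDerivAt sq1 (-(1 / (2 * sq1 x))) x := by
  have h0 : (0:ℝ) < 1 - x := by linarith
  have h := (Real.hasDerivAt_sqrt (ne_of_gt h0)).comp x
    ((hasDerivAt_const x (1:ℝ)).sub (hasDerivAt_id x))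
  unfold sq1
  refine h.congr_deriv (Eq.symm ?_)
  simp

lemma dpow {n : ℕ} (m : ℕ) (hm : m + 2 = n) {x : ℝ} (hx : x < 1) :
    HasDerivAt (fun t => sq1 t ^ n) (-(n:ℝ)/2 * sq1 x ^ m) x := by
  subst hm
  have h0 : (0:ℝ) < 1 - x := by linarith
  have hu : 0 < sq1 x := Real.sqrt_pos.2 h0
  have h := (hasDerivAt_sq1 hx).fun_pow (m + 2)
  refine h.congr_deriv (Eq.symm ?_)
  have h2 : sq1 x ^ (m + 2 - 1) = sq1 x ^ m * sq1 x := by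
    rw [show m + 2 - 1 = m + 1 from rfl, pow_succ]
  rw [h2]
  field_simp

lemma hasDerivAt_FA {x : ℝ} (hx : x < 1) : HasDerivAt FA (zetav x) x := by
  have h := (((((dpow 1 rfl hx).const_mul ((-(2/3)) : ℝ)).add ((dpow 2 rfl hx).const_mul ((1/2) : ℝ))).add ((dpow 3 rfl hx).const_mul ((4/15) : ℝ))).add ((dpow 4 rfl hx).const_mul ((-(1/3)) : ℝ)))
  unfold FA
  refine h.congr_deriv (Eq.symm ?_)
  unfold zetav
  push_cast
  ring

lemma hasDerivAt_Ge {x : ℝ} (hx : x < 1) : HasDerivAt Ge (e2v x * zetav x) x := by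
  have h := (((((((((dpow 2 rfl hx).const_mul ((-(1/2)) : ℝ)).add ((dpow 3 rfl hx).const_mul ((2/5) : ℝ))).add ((dpow 4 rfl hx).const_mul ((2/3) : ℝ))).add ((dpow 5 rfl hx).const_mul ((-(2/3)) : ℝ))).add ((dpow 6 rfl hx).const_mul ((-(19/45)) : ℝ))).add ((dpow 7 rfl hx).const_mul ((64/135) : ℝ))).add ((dpow 8 rfl hx).const_mul ((8/75) : ℝ))).add ((dpow 9 rfl hx).const_mul ((-(8/55)) : ℝ)))
  unfold Ge
  refine h.congr_deriv (Eq.symm ?_)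
  unfold e2v zetav
  push_cast
  ring

lemma hasDerivAt_Gp {x : ℝ} (hx : x < 1) : HasDerivAt Gp (psiv x * zetav x) x := by
  have h := (((((((dpow 2 rfl hx).const_mul ((-(1/2)) : ℝ)).add ((dpow 3 rfl hx).const_mul ((2/5) : ℝ))).add ((dpow 4 rfl hx).const_mul ((4/9) : ℝ))).add ((dpow 5 rfl hx).const_mul ((-(10/21)) : ℝ))).add ((dpow 6 rfl hx).const_mul ((-(1/9)) : ℝ))).add ((dpow 7 rfl hx).const_mul ((4/27) : ℝ)))
  unfold Gp
  refine h.congr_deriv (Eq.symm ?_)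
  unfold psiv zetav
  push_cast
  ring

lemma hasDerivAt_HH {x : ℝ} (hx : x < 1) :
    HasDerivAt HH (zetav x * (e2v x * (FA x + 7/30) - Ge x - psiv x * (179/1890))) x := by
  have h := (((((((((((((((dpow 2 rfl hx).const_mul ((-(131/1890)) : ℝ)).add ((dpow 3 rfl hx).const_mul ((262/4725) : ℝ))).add ((dpow 4 rfl hx).const_mul ((193/1701) : ℝ))).add ((dpow 5 rfl hx).const_mul ((-(1247/19845)) : ℝ))).add ((dpow 6 rfl hx).const_mul ((-(6577/42525)) : ℝ))).add ((dpow 7 rfl hx).const_mul ((-(1853/127575)) : ℝ))).add ((dpow 8 rfl hx).const_mul ((59/250) : ℝ))).add ((dpow 9 rfl hx).const_mul ((233/7425) : ℝ))).add ((dpow 10 rfl hx).const_mul ((-(209/810)) : ℝ))).add ((dpow 11 rfl hx).const_mul ((386/8775) : ℝ))).add ((dpow 12 rfl hx).const_mul ((20971/155925) : ℝ))).add ((dpow 13 rfl hx).const_mul ((-(6244/111375)) : ℝ))).add ((dpow 14 rfl hx).const_mul ((-(58/2475)) : ℝ))).add ((dpow 15 rfl hx).const_mul ((8/561) : ℝ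)))
  unfold HH
  refine h.congr_deriv (Eq.symm ?_)
  unfold zetav e2v FA Ge psiv
  push_cast
  ring

lemma my_ftc (f F : ℝ → ℝ) {a b : ℝ} (hab : a ≤ b) (hFc : Continuous F)
    (hd : ∀ x ∈ Set.Ioo a b, HasDerivAt F (f x) x) (hi : IntervalIntegrable f volume a b) :
    ∫ x in a..b, f x = F b - F a :=
  intervalIntegral.integral_eq_sub_of_hasDeriv_right_of_le hab hFc.continuousOn
    (fun x hx => (hd x hx).hasDerivWithinAt) hi

lemma rpow_integrable {m : ℝ} :
    IntervalIntegrable (fun x : ℝ => (1 - x) ^ (-(1/2) : ℝ)) volume m 1 := by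
  have h := intervalIntegral.intervalIntegrable_rpow' (a := 1 - m) (b := 1 - 1)
    (r := -(1/2)) (by norm_num)
  have h2 := h.comp_sub_left 1
  simpa using h2

lemma psi_integral {m : ℝ} (hm1 : m < 1) :
    ∫ x in m..1, 1/2 * (1 - x) ^ (-(1/2) : ℝ) * (2 * x - 1) = psiv m := by
  have key := my_ftc (fun x => 1/2 * (1 - x) ^ (-(1/2) : ℝ) * (2 * x - 1))
      (fun y => 2/3 * sq1 y ^ 3 - sq1 y) hm1.le (by fun_prop) ?_ ?_
  · rw [key]
    norm_num [sq1, psiv, Real.sqrt_one]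
  · intro x hx
    have hx1 : x < 1 := hx.2
    have h0 : (0:ℝ) < 1 - x := by linarith
    have hu : 0 < sq1 x := Real.sqrt_pos.2 h0
    have husq : sq1 x ^ 2 = 1 - x := Real.sq_sqrt h0.le
    have h3 : HasDerivAt (fun t => sq1 t ^ 3)
        (3 * sq1 x ^ 2 * -(1 / (2 * sq1 x))) x := by
      simpa using (hasDerivAt_sq1 hx1).fun_pow 3
    have h := (h3.const_mul (2/3 : ℝ)).sub (hasDerivAt_sq1 hx1)
    refine h.congr_deriv (Eq.symm ?_)
    have hrw : (1 - x) ^ (-(1/2) : ℝ) = (sq1 x)⁻¹ := by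
      rw [Real.rpow_neg h0.le, ← Real.sqrt_eq_rpow]; rfl
    simp only [hrw]
    field_simp
    nlinarith [husq]
  · have h1 := (rpow_integrable (m := m)).const_mul (1/2 : ℝ)
    have h2 := h1.mul_continuousOn (g := fun x => 2 * x - 1)
      (by apply Continuous.continuousOn; fun_prop)
    exact h2

lemma e2_integral {m : ℝ} (hm1 : m < 1) :
    ∫ x in m..1, 1/2 * (1 - x) ^ (-(1/2) : ℝ) * (2 * x - 1) ^ 2 = e2v m := by
  have key := my_ftc (fun x => 1/2 * (1 - x) ^ (-(1/2) : ℝ) * (2 * x - 1) ^ 2)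
      (fun y => 4/3 * sq1 y ^ 3 - 4/5 * sq1 y ^ 5 - sq1 y) hm1.le (by fun_prop) ?_ ?_
  · rw [key]
    norm_num [sq1, e2v, Real.sqrt_one]
    ring
  · intro x hx
    have hx1 : x < 1 := hx.2
    have h0 : (0:ℝ) < 1 - x := by linarith
    have hu : 0 < sq1 x := Real.sqrt_pos.2 h0
    have husq : sq1 x ^ 2 = 1 - x := Real.sq_sqrt h0.le
    have h3 : HasDerivAt (fun t => sq1 t ^ 3)
        (3 * sq1 x ^ 2 * -(1 / (2 * sq1 x))) x := by
      simpa using (hasDerivAt_sq1 hx1).fun_pow 3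
    have h5 : HasDerivAt (fun t => sq1 t ^ 5)
        (5 * sq1 x ^ 4 * -(1 / (2 * sq1 x))) x := by
      simpa using (hasDerivAt_sq1 hx1).fun_pow 5
    have h := ((h3.const_mul (4/3 : ℝ)).sub (h5.const_mul (4/5 : ℝ))).sub (hasDerivAt_sq1 hx1)
    refine h.congr_deriv (Eq.symm ?_)
    have hrw : (1 - x) ^ (-(1/2) : ℝ) = (sq1 x)⁻¹ := by
      rw [Real.rpow_neg h0.le, ← Real.sqrt_eq_rpow]; rfl
    simp only [hrw]
    field_simp
    linear_combination 4 * (x - sq1 x ^ 2) * husq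
  · have h1 := (rpow_integrable (m := m)).const_mul (1/2 : ℝ)
    have h2 := h1.mul_continuousOn (g := fun x => (2 * x - 1) ^ 2)
      (by apply Continuous.continuousOn; fun_prop)
    exact h2

lemma FA_zero : FA 0 = -(7/30) := by norm_num [FA, sq1, Real.sqrt_one]
lemma Gp_zero : Gp 0 = -(179/1890) := by norm_num [Gp, sq1, Real.sqrt_one]
lemma Ge_one : Ge 1 = 0 := by norm_num [Ge, sq1]
lemma Gp_one : Gp 1 = 0 := by norm_num [Gp, sq1]
lemma HH_one : HH 1 = 0 := by norm_num [HH, sq1]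
lemma HH_zero : HH 0 = -(213228299/21709437750) := by norm_num [HH, sq1, Real.sqrt_one]

lemma zetav_link {t : ℝ} (ht : t ≤ 1) : psiv t - t * (1 - t) = zetav t := by
  have hu : sq1 t ^ 2 = 1 - t := Real.sq_sqrt (by linarith)
  unfold psiv zetav
  linear_combination (t - sq1 t ^ 2) * hu

lemma key_pushforward {Ω : Type*} [MeasurableSpace Ω] (P : Measure Ω) [IsProbabilityMeasure P]
    (U : Ω → ℝ) (hU : Measurable U)
    (hlaw : P.map U = (volume.restrict (Set.Ioo (0 : ℝ) 1)).withDensity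
      (fun x => ENNReal.ofReal ((1 / 2) * (1 - x) ^ (-(1 / 2) : ℝ))))
    (g : ℝ → ℝ) (hg : Continuous g) {m : ℝ} (hm : m ∈ Set.Ioo (0:ℝ) 1) :
    ∫ ω in {ω | m ≤ U ω}, g (U ω) ∂P
      = ∫ x in m..1, 1/2 * (1 - x) ^ (-(1/2) : ℝ) * g x := by
  have hset : {ω | m ≤ U ω} = U ⁻¹' (Set.Ici m) := rfl
  rw [hset, ← setIntegral_map measurableSet_Ici hg.aestronglyMeasurable hU.aemeasurable, hlaw]
  rw [show (fun x : ℝ => ENNReal.ofReal ((1 / 2) * (1 - x) ^ (-(1 / 2) : ℝ)))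
      = (fun x : ℝ => ((((1 / 2) * (1 - x) ^ (-(1 / 2) : ℝ)).toNNReal : ℝ≥0) : ℝ≥0∞)) from rfl]
  have hmeas : Measurable fun x : ℝ => ((1 / 2) * (1 - x) ^ (-(1 / 2) : ℝ)).toNNReal := by
    apply Measurable.real_toNNReal
    exact (measurable_const.mul ((measurable_const.sub measurable_id).pow measurable_const))
  rw [setIntegral_withDensity_eq_setIntegral_smul hmeas g measurableSet_Ici,
    Measure.restrict_restrict measurableSet_Ici]
  have hIset : Set.Ici m ∩ Set.Ioo 0 1 = Set.Ico m 1 := by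
    ext x
    simp only [Set.mem_inter_iff, Set.mem_Ici, Set.mem_Ioo, Set.mem_Ico]
    constructor
    · rintro ⟨h1, _, h3⟩; exact ⟨h1, h3⟩
    · rintro ⟨h1, h2⟩; exact ⟨h1, lt_of_lt_of_le hm.1 h1, h2⟩
  rw [hIset, integral_Ico_eq_integral_Ioo]
  rw [intervalIntegral.integral_of_le hm.2.le, integral_Ioc_eq_integral_Ioo]
  apply setIntegral_congr_fun measurableSet_Ioo
  intro x hx
  have h0 : (0:ℝ) < 1 - x := by linarith [hx.2]
  have hpos : 0 ≤ (1 / 2) * (1 - x) ^ (-(1 / 2) : ℝ) :=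
    mul_nonneg (by norm_num) (Real.rpow_nonneg h0.le _)
  simp only [NNReal.smul_def, Real.coe_toNNReal _ hpos, smul_eq_mul]



/-- **Example (c), Beta(1,1/2), limiting variance**: if `U` has density `(1/2)(1−x)^{−1/2}` on
`(0,1)`, `Ψ(t) = E[(2U−1)·1{U ≥ t}]`, `z(t) = Ψ(t) − t(1−t)` and
`K_W(s,t) = E[(2U−1)²·1{U ≥ max(s,t)}] − Ψ(s)Ψ(t)`, then
`σ² = 4·∫₀¹∫₀¹ K_W(s,t)·z(s)·z(t) ds dt = 426456598/10854718875`. -/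
theorem beta_1_half_sigma_sq
    {Ω : Type*} [MeasurableSpace Ω] (P : Measure Ω) [IsProbabilityMeasure P]
    (U : Ω → ℝ) (hU : Measurable U)
    (hlaw : P.map U = (volume.restrict (Set.Ioo (0 : ℝ) 1)).withDensity
      (fun x => ENNReal.ofReal ((1 / 2) * (1 - x) ^ (-(1 / 2) : ℝ))))
    (Ψ z : ℝ → ℝ) (KW : ℝ → ℝ → ℝ)
    (hΨ : ∀ t, Ψ t = ∫ ω in {ω | t ≤ U ω}, (2 * U ω - 1) ∂P)
    (hz : ∀ t, z t = Ψ t - t * (1 - t))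
    (hKW : ∀ s t, KW s t =
      (∫ ω in {ω | max s t ≤ U ω}, (2 * U ω - 1) ^ 2 ∂P) - Ψ s * Ψ t) :
    4 * ∫ s in Set.Ioo (0 : ℝ) 1, ∫ t in Set.Ioo (0 : ℝ) 1, KW s t * z s * z t
      = 426456598 / 10854718875 := by
  have hψeq : ∀ t ∈ Set.Ioo (0:ℝ) 1, Ψ t = psiv t := fun t ht =>
    (hΨ t).trans ((key_pushforward P U hU hlaw (fun x => 2 * x - 1) (by fun_prop) ht).trans
      (psi_integral ht.2))
  have he2 : ∀ m ∈ Set.Ioo (0:ℝ) 1,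
      (∫ ω in {ω | m ≤ U ω}, (2 * U ω - 1) ^ 2 ∂P) = e2v m := fun m hm =>
    (key_pushforward P U hU hlaw (fun x => (2 * x - 1) ^ 2) (by fun_prop) hm).trans
      (e2_integral hm.2)
  have hzeq : ∀ t ∈ Set.Ioo (0:ℝ) 1, z t = zetav t := fun t ht => by
    rw [hz t, hψeq t ht]; exact zetav_link ht.2.le
  have hinner : ∀ s ∈ Set.Ioo (0:ℝ) 1, (∫ t in Set.Ioo (0:ℝ) 1, KW s t * z s * z t)
      = zetav s * (e2v s * (FA s + 7/30) - Ge s - psiv s * (179/1890)) := by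
    intro s hs
    have hrep : ∀ t ∈ Set.Ioo (0:ℝ) 1, KW s t * z s * z t
        = (e2v (max s t) - psiv s * psiv t) * (zetav s * zetav t) := by
      intro t ht
      have hmax : max s t ∈ Set.Ioo (0:ℝ) 1 := ⟨lt_max_of_lt_left hs.1, max_lt hs.2 ht.2⟩
      rw [hKW s t, he2 _ hmax, hψeq s hs, hψeq t ht, hzeq s hs, hzeq t ht]
      ring
    rw [setIntegral_congr_fun measurableSet_Ioo hrep]
    have hcont : Continuous fun t => (e2v (max s t) - psiv s * psiv t) * (zetav s * zetav t) := by
      apply Continuous.mul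
      · exact (continuous_e2v.comp (continuous_const.max continuous_id)).sub
          (continuous_const.mul continuous_psiv)
      · fun_prop
    have IA : ∫ t in (0:ℝ)..s, zetav t = FA s - FA 0 :=
      my_ftc zetav FA hs.1.le continuous_FA (fun x hx => hasDerivAt_FA (hx.2.trans hs.2))
        (continuous_zetav.intervalIntegrable _ _)
    have IP1 : ∫ t in (0:ℝ)..s, psiv t * zetav t = Gp s - Gp 0 :=
      my_ftc _ Gp hs.1.le continuous_Gp (fun x hx => hasDerivAt_Gp (hx.2.trans hs.2))
        ((continuous_psiv.mul continuous_zetav).intervalIntegrable _ _)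
    have IE : ∫ t in s..1, e2v t * zetav t = Ge 1 - Ge s :=
      my_ftc _ Ge hs.2.le continuous_Ge (fun x hx => hasDerivAt_Ge hx.2)
        ((continuous_e2v.mul continuous_zetav).intervalIntegrable _ _)
    have IP2 : ∫ t in s..1, psiv t * zetav t = Gp 1 - Gp s :=
      my_ftc _ Gp hs.2.le continuous_Gp (fun x hx => hasDerivAt_Gp hx.2)
        ((continuous_psiv.mul continuous_zetav).intervalIntegrable _ _)
    have hp1 : ∫ t in (0:ℝ)..s, (e2v (max s t) - psiv s * psiv t) * (zetav s * zetav t)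
        = (e2v s * zetav s) * (FA s - FA 0) - (psiv s * zetav s) * (Gp s - Gp 0) := by
      have hcg : ∫ t in (0:ℝ)..s, (e2v (max s t) - psiv s * psiv t) * (zetav s * zetav t)
          = ∫ t in (0:ℝ)..s,
              ((e2v s * zetav s) * zetav t - (psiv s * zetav s) * (psiv t * zetav t)) := by
        apply intervalIntegral.integral_congr
        intro t ht
        rw [Set.uIcc_of_le hs.1.le] at ht
        simp only [max_eq_left ht.2]
        ring
      rw [hcg, intervalIntegral.integral_sub
          (f := fun t => e2v s * zetav s * zetav t) (g := fun t => psiv s * zetav s * (psiv t * zetav t))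
          (((continuous_const.mul continuous_zetav).intervalIntegrable _ _))
          (((continuous_const.mul (continuous_psiv.mul continuous_zetav)).intervalIntegrable _ _)),
        intervalIntegral.integral_const_mul, intervalIntegral.integral_const_mul, IA, IP1]
    have hp2 : ∫ t in s..1, (e2v (max s t) - psiv s * psiv t) * (zetav s * zetav t)
        = zetav s * (Ge 1 - Ge s) - (psiv s * zetav s) * (Gp 1 - Gp s) := by
      have hcg : ∫ t in s..1, (e2v (max s t) - psiv s * psiv t) * (zetav s * zetav t)
          = ∫ t in s..1,
              (zetav s * (e2v t * zetav t) - (psiv s * zetav s) * (psiv t * zetav t)) := by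
        apply intervalIntegral.integral_congr
        intro t ht
        rw [Set.uIcc_of_le hs.2.le] at ht
        simp only [max_eq_right ht.1]
        ring
      rw [hcg, intervalIntegral.integral_sub
          (f := fun t => zetav s * (e2v t * zetav t)) (g := fun t => psiv s * zetav s * (psiv t * zetav t))
          (((continuous_const.mul (continuous_e2v.mul continuous_zetav)).intervalIntegrable _ _))
          (((continuous_const.mul (continuous_psiv.mul continuous_zetav)).intervalIntegrable _ _)),
        intervalIntegral.integral_const_mul, intervalIntegral.integral_const_mul, IE, IP2]
    rw [← integral_Ioc_eq_integral_Ioo, ← intervalIntegral.integral_of_le zero_le_one,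
      ← intervalIntegral.integral_add_adjacent_intervals (b := s)
        (hcont.intervalIntegrable 0 s) (hcont.intervalIntegrable s 1), hp1, hp2,
      FA_zero, Gp_zero, Ge_one, Gp_one]
    ring
  rw [setIntegral_congr_fun measurableSet_Ioo hinner,
    ← integral_Ioc_eq_integral_Ioo, ← intervalIntegral.integral_of_le zero_le_one,
    my_ftc _ HH zero_le_one continuous_HH (fun x hx => hasDerivAt_HH hx.2)
      ((continuous_zetav.mul ((continuous_e2v.mul (continuous_FA.add continuous_const)).sub
        continuous_Ge |>.sub (continuous_psiv.mul continuous_const))).intervalIntegrable _ _),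
    HH_one, HH_zero]
  norm_num
end
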